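/- Let X be a Banach space, A ⊆ X* nonempty weak*-closed convex, and B = {0} × ℝ₊ ⊆ X* × ℝ. If C ⊆ X* × ℝ is weak*-compactly generated in the sense that C is weak*-closed convex with recession cone C_∞ satisfying C_∞ ∩ (−B) = {(0,0)}, then C + B is weak*-closed and (C + B)_∞ = C_∞ + B. -/

import Mathlib

open Pointwise
noncomputable section

open Filter Topology

set_option maxHeartbeats 1000000

/-- The recession cone of a convex set:
`C_∞ = {v : ∃ c ∈ C, c + λv ∈ C for all λ ≥ 0}`. -/
def recCone {V : Type*} [AddCommMonoid V] [Module ℝ V] (C : Set V) : Set V :=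
  {v | ∃ c ∈ C, ∀ l : ℝ, 0 ≤ l → c + l • v ∈ C}

lemma mem_recCone_of_tendsto {V : Type*} [AddCommGroup V] [Module ℝ V] [TopologicalSpace V]
    [IsTopologicalAddGroup V] [ContinuousSMul ℝ V] {C : Set V}
    (hCcl : IsClosed C) (hCconv : Convex ℝ C) {c0 : V} (hc0 : c0 ∈ C)
    {ι : Type*} {F : Filter ι} [F.NeBot] {q : ι → V} {T : ι → ℝ}
    (hq : ∀ᶠ i in F, q i ∈ C) (hT : Tendsto T F atTop) {u : V}
    (hu : Tendsto (fun i => (T i)⁻¹ • (q i - c0)) F (𝓝 u)) : u ∈ recCone C := by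
  refine ⟨c0, hc0, fun μ hμ => ?_⟩
  have hev : ∀ᶠ i in F, T i ≥ max μ 1 := hT.eventually_ge_atTop _
  have hmem : ∀ᶠ i in F, c0 + (μ / T i) • (q i - c0) ∈ C := by
    filter_upwards [hq, hev] with i hqi hTi
    have hT1 : (0:ℝ) < T i := lt_of_lt_of_le one_pos (le_trans (le_max_right _ _) hTi)
    have h01 : μ / T i ∈ Set.Icc (0:ℝ) 1 := by
      constructor
      · positivity
      · rw [div_le_one hT1]; exact le_trans (le_max_left _ _) hTi
    have := hCconv hc0 hqi (by linarith [h01.2] : (0:ℝ) ≤ 1 - μ / T i) h01.1 (by ring)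
    convert this using 1
    simp [smul_sub, sub_smul]
    abel
  have htend : Tendsto (fun i => c0 + (μ / T i) • (q i - c0)) F (𝓝 (c0 + μ • u)) := by
    have : Tendsto (fun i => c0 + μ • ((T i)⁻¹ • (q i - c0))) F (𝓝 (c0 + μ • u)) :=
      tendsto_const_nhds.add (hu.const_smul μ)
    simpa [div_eq_mul_inv, smul_smul] using this
  exact hCcl.mem_of_tendsto htend hmem

/-- Dieudonné-type closedness: in `X* × ℝ` (with `X*` carrying the weak* topology), if `C` is
nonempty, weak*-closed and convex with `C_∞ ∩ (−B) = {0}` where `B = {0} × ℝ₊`, then `C + B`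
is weak*-closed and `(C + B)_∞ = C_∞ + B`. -/
theorem closed_add_ray_of_recCone_inter
    {X : Type*} [NormedAddCommGroup X] [NormedSpace ℝ X]
    (A : Set (WeakDual ℝ X)) (hAne : A.Nonempty) (hAcl : IsClosed A) (hAconv : Convex ℝ A)
    (C : Set (WeakDual ℝ X × ℝ)) (hCne : C.Nonempty) (hCcl : IsClosed C)
    (hCconv : Convex ℝ C)
    (B : Set (WeakDual ℝ X × ℝ)) (hB : B = {p | p.1 = 0 ∧ 0 ≤ p.2})
    (hrec : recCone C ∩ (-B) = {0}) :
    IsClosed (C + B) ∧ recCone (C + B) = recCone C + B := by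
  subst hB
  obtain ⟨⟨c01, c02⟩, hc0⟩ := hCne
  -- membership characterization of C + B
  have hCB : ∀ p : WeakDual ℝ X × ℝ,
      p ∈ C + {p : WeakDual ℝ X × ℝ | p.1 = 0 ∧ 0 ≤ p.2} ↔ ∃ s, (p.1, s) ∈ C ∧ s ≤ p.2 := by
    intro p
    rw [Set.mem_add]
    constructor
    · rintro ⟨c, hc, b, hb, rfl⟩
      refine ⟨c.2, ?_, by simpa using hb.2⟩
      have : ((c + b).1, c.2) = c := by
        rw [Prod.ext_iff]; exact ⟨by simp [hb.1], rfl⟩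
      rwa [this]
    · rintro ⟨s, hsC, hsle⟩
      exact ⟨(p.1, s), hsC, (0, p.2 - s), ⟨rfl, by simpa using hsle⟩,
        by rw [Prod.ext_iff]; simp⟩
  -- the key exclusion
  have key : ((0 : WeakDual ℝ X), (-1:ℝ)) ∉ recCone C := by
    intro h
    have hmem : ((0 : WeakDual ℝ X), (-1:ℝ)) ∈
        recCone C ∩ (-{p : WeakDual ℝ X × ℝ | p.1 = 0 ∧ 0 ≤ p.2}) := by
      refine ⟨h, ?_⟩
      rw [Set.mem_neg]
      exact ⟨by simp, by norm_num⟩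
    rw [hrec] at hmem
    simp [Prod.ext_iff] at hmem
  -- closedness of C + B
  have hclosed : IsClosed (C + {p : WeakDual ℝ X × ℝ | p.1 = 0 ∧ 0 ≤ p.2}) := by
    refine isClosed_of_closure_subset fun p hp => ?_
    obtain ⟨F, hFs, hFp⟩ := mem_closure_iff_ultrafilter.mp hp
    have hsel : ∀ q : WeakDual ℝ X × ℝ, ∃ s : ℝ,
        q ∈ C + {p : WeakDual ℝ X × ℝ | p.1 = 0 ∧ 0 ≤ p.2} → ((q.1, s) ∈ C ∧ s ≤ q.2) := by
      intro q
      by_cases h : q ∈ C + {p : WeakDual ℝ X × ℝ | p.1 = 0 ∧ 0 ≤ p.2}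
      · obtain ⟨s, hs⟩ := (hCB q).mp h; exact ⟨s, fun _ => hs⟩
      · exact ⟨0, fun h' => absurd h' h⟩
    choose s hs using hsel
    set t : (WeakDual ℝ X × ℝ) → ℝ := fun q => q.2 - s q with ht
    by_cases hbd : ∃ M, {q | t q ≤ M} ∈ F
    · -- bounded case: extract a limit of t
      obtain ⟨M, hM⟩ := hbd
      have h0t : ∀ᶠ q in (F : Filter _), 0 ≤ t q := by
        filter_upwards [hFs] with q hq
        have := (hs q hq).2
        simp only [ht]; linarith
      have hIcc : Set.Icc (0:ℝ) M ∈ Filter.map t F := by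
        rw [mem_map]
        filter_upwards [h0t, hM] with q hq1 hq2
        exact ⟨hq1, hq2⟩
      obtain ⟨t₀, ht₀mem, ht₀⟩ := (isCompact_Icc).ultrafilter_le_nhds (F.map t)
        (le_principal_iff.mpr hIcc)
      have htt : Tendsto t (F : Filter _) (𝓝 t₀) := ht₀
      have hc : Tendsto (fun q => q - (((0 : WeakDual ℝ X), t q)))
          (F : Filter _) (𝓝 (p - ((0 : WeakDual ℝ X), t₀))) :=
        (tendsto_id'.mpr hFp).sub (tendsto_const_nhds.prodMk_nhds htt)
      have hmemC : ∀ᶠ q in (F : Filter _), q - (((0 : WeakDual ℝ X), t q)) ∈ C := by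
        filter_upwards [hFs] with q hq
        have heq : q - (((0 : WeakDual ℝ X), t q)) = (q.1, s q) := by
          rw [Prod.ext_iff]; constructor <;> simp [ht]
        rw [heq]; exact (hs q hq).1
      have hpC : p - ((0 : WeakDual ℝ X), t₀) ∈ C := hCcl.mem_of_tendsto hc hmemC
      rw [hCB]
      refine ⟨p.2 - t₀, ?_, by linarith [ht₀mem.1]⟩
      have : p - ((0 : WeakDual ℝ X), t₀) = (p.1, p.2 - t₀) := by
        rw [Prod.ext_iff]; constructor <;> simp
      rwa [this] at hpC
    · -- unbounded case: contradiction with key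
      exfalso
      push_neg at hbd
      have hT : Tendsto t (F : Filter _) atTop := by
        rw [tendsto_atTop]
        intro M
        have h1 : {q | t q ≤ M} ∉ F := hbd M
        have h2 := Ultrafilter.compl_mem_iff_notMem.mpr h1
        filter_upwards [h2] with q hq
        exact le_of_lt (lt_of_not_ge hq)
      refine key (mem_recCone_of_tendsto hCcl hCconv hc0
        (q := fun q => q - ((0 : WeakDual ℝ X), t q)) (T := t) ?_ hT ?_)
      · filter_upwards [hFs] with q hq
        have heq : q - (((0 : WeakDual ℝ X), t q)) = (q.1, s q) := by
          rw [Prod.ext_iff]; constructor <;> simp [ht]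
        rw [heq]; exact (hs q hq).1
      · have hev : ∀ᶠ q in (F : Filter _), (1:ℝ) ≤ t q := hT.eventually_ge_atTop 1
        have htend : Tendsto
            (fun q => (t q)⁻¹ • (q - (c01, c02)) - ((0 : WeakDual ℝ X), (1:ℝ)))
            (F : Filter _) (𝓝 (((0 : WeakDual ℝ X), (-1:ℝ)))) := by
          have h1 : Tendsto (fun q => (t q)⁻¹ • (q - (c01, c02))) (F : Filter _)
              (𝓝 ((0:ℝ) • (p - (c01, c02)))) :=
            (tendsto_inv_atTop_zero.comp hT).smul ((tendsto_id'.mpr hFp).sub tendsto_const_nhds)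
          have := h1.sub (tendsto_const_nhds (x := ((0 : WeakDual ℝ X), (1:ℝ))))
          convert this using 2
          rw [Prod.ext_iff]; constructor <;> simp
        refine Tendsto.congr' ?_ htend
        filter_upwards [hev] with q hq
        have hne : t q ≠ 0 := by linarith
        have h2 : ((0 : WeakDual ℝ X), (1:ℝ)) = (t q)⁻¹ • (((0 : WeakDual ℝ X), t q)) := by
          rw [Prod.ext_iff]
          constructor
          · simp
          · simp [inv_mul_cancel₀ hne]
        rw [h2, ← smul_sub]
        congr 1
        abel
  refine ⟨hclosed, ?_⟩
  ext v
  constructor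
  · rintro ⟨pp, hpp, hray⟩
    have hsn : ∀ n : ℕ, ∃ sn, (pp.1 + ((n:ℝ)+1) • v.1, sn) ∈ C ∧
        sn ≤ pp.2 + ((n:ℝ)+1) * v.2 := by
      intro n
      have h := hray ((n:ℝ)+1) (by positivity)
      obtain ⟨sn, hh1, hh2⟩ := (hCB _).mp h
      exact ⟨sn, by simpa using hh1, by simpa [smul_eq_mul] using hh2⟩
    choose sn h1 h2 using hsn
    set a : ℕ → ℝ := fun n => (sn n - c02) / ((n:ℝ)+1) with ha
    have haub : ∀ n : ℕ, a n ≤ (pp.2 - c02) / ((n:ℝ)+1) + v.2 := by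
      intro n
      have hpos : (0:ℝ) < (n:ℝ)+1 := by positivity
      have hb1 : (sn n - c02) / ((n:ℝ)+1) ≤ (pp.2 + ((n:ℝ)+1) * v.2 - c02) / ((n:ℝ)+1) := by
        apply div_le_div_of_nonneg_right ?_ (le_of_lt hpos)
        · linarith [h2 n]
      have hb2 : (pp.2 + ((n:ℝ)+1) * v.2 - c02) / ((n:ℝ)+1)
          = (pp.2 - c02) / ((n:ℝ)+1) + v.2 := by field_simp; ring
      simp only [ha]
      linarith
    by_cases hlb : ∃ K, ∀ n, K ≤ a n
    · -- bounded below: extract a convergent subsequence of a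
      obtain ⟨K, hK⟩ := hlb
      set M : ℝ := |pp.2 - c02| + v.2 with hMdef
      have hub : ∀ n, a n ≤ M := by
        intro n
        have hpos : (0:ℝ) < (n:ℝ)+1 := by positivity
        have hb3 : (pp.2 - c02) / ((n:ℝ)+1) ≤ |pp.2 - c02| := by
          rw [div_le_iff₀ hpos]
          nlinarith [le_abs_self (pp.2 - c02), abs_nonneg (pp.2 - c02), Nat.cast_nonneg (α := ℝ) n]
        have := haub n
        simp only [hMdef]
        linarith
      have hmem : ∀ n, a n ∈ Set.Icc K M := fun n => ⟨hK n, hub n⟩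
      obtain ⟨σ, hσmem, φ, hφ, hσ⟩ :=
        tendsto_subseq_of_bounded (Metric.isBounded_Icc K M) hmem
      have hφtop : Tendsto (fun k => ((φ k : ℝ) + 1)) atTop atTop :=
        tendsto_atTop_add_const_right _ 1 (tendsto_natCast_atTop_atTop.comp hφ.tendsto_atTop)
      have hinv : Tendsto (fun k => ((φ k : ℝ) + 1)⁻¹) atTop (𝓝 0) :=
        tendsto_inv_atTop_zero.comp hφtop
      -- the limit direction
      have hσle : σ ≤ v.2 := by
        have hg : Tendsto (fun k => (pp.2 - c02) / ((φ k : ℝ)+1) + v.2) atTop (𝓝 v.2) := by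
          have h5 : Tendsto (fun k => (pp.2 - c02) * ((φ k : ℝ)+1)⁻¹) atTop (𝓝 0) := by
            simpa using hinv.const_mul (pp.2 - c02)
          simpa [div_eq_mul_inv] using h5.add_const v.2
        refine le_of_tendsto_of_tendsto hσ hg ?_
        filter_upwards with k
        exact haub (φ k)
      have hurec : (v.1, σ) ∈ recCone C := by
        refine mem_recCone_of_tendsto hCcl hCconv hc0
          (q := fun k => ((pp.1 + ((φ k:ℝ)+1) • v.1 : WeakDual ℝ X), sn (φ k)))
          (T := fun k => ((φ k : ℝ)+1)) (Eventually.of_forall fun k => h1 (φ k)) hφtop ?_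
        have hfst : Tendsto (fun k => ((((φ k:ℝ)+1)⁻¹ • (pp.1 - c01) + v.1 : WeakDual ℝ X)))
            atTop (𝓝 v.1) := by
          have h6 : Tendsto (fun k => ((((φ k:ℝ)+1)⁻¹ • (pp.1 - c01) : WeakDual ℝ X))) atTop
              (𝓝 ((0:ℝ) • (pp.1 - c01))) := hinv.smul_const _
          simpa using h6.add_const v.1
        have hsnd : Tendsto (fun k => (((φ k:ℝ)+1)⁻¹ * (sn (φ k) - c02))) atTop (𝓝 σ) := by
          refine hσ.congr fun k => ?_
          simp only [Function.comp_apply, ha, div_eq_inv_mul]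
        refine (hfst.prodMk_nhds hsnd).congr fun k => ?_
        have hne : ((φ k:ℝ)+1) ≠ 0 := by positivity
        rw [show ((pp.1 + ((φ k:ℝ)+1) • v.1 : WeakDual ℝ X), sn (φ k)) - (c01, c02)
            = ((pp.1 + ((φ k:ℝ)+1) • v.1 - c01 : WeakDual ℝ X), sn (φ k) - c02) from rfl,
          Prod.smul_mk, Prod.mk.injEq]
        constructor
        · rw [show (pp.1 + ((φ k:ℝ)+1) • v.1) - c01 = (pp.1 - c01) + ((φ k:ℝ)+1) • v.1
            from by abel, smul_add, smul_smul, inv_mul_cancel₀ hne, one_smul]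
        · rw [smul_eq_mul]
      refine ⟨(v.1, σ), hurec, (0, v.2 - σ), ⟨rfl, by simpa using hσle⟩, ?_⟩
      rw [Prod.ext_iff]; constructor <;> simp
    · -- unbounded below: contradiction with key
      exfalso
      push_neg at hlb
      have hsel2 : ∀ k : ℕ, ∃ n, a n < -((k:ℝ)+1) := fun k => hlb (-((k:ℝ)+1))
      choose ν hν using hsel2
      set T : ℕ → ℝ := fun k => c02 - sn (ν k) with hTdef
      have hTlb : ∀ k : ℕ, ((k:ℝ)+1) * ((ν k:ℝ)+1) < T k := by
        intro k
        have hpos : (0:ℝ) < (ν k:ℝ)+1 := by positivity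
        have h4 := (div_lt_iff₀ hpos).mp (hν k)
        simp only [hTdef]
        nlinarith
      have hTbig : ∀ k : ℕ, ((k:ℝ)+1) ≤ T k := by
        intro k
        have hpos : (1:ℝ) ≤ (ν k:ℝ)+1 := by
          have := Nat.cast_nonneg (α := ℝ) (ν k); linarith
        have h3 := hTlb k
        nlinarith [Nat.cast_nonneg (α := ℝ) k]
      have hTpos : ∀ k, (0:ℝ) < T k := fun k => lt_of_lt_of_le (by positivity) (hTbig k)
      have hNcast : Tendsto (fun k : ℕ => ((k:ℝ)+1)) atTop atTop :=
        tendsto_atTop_add_const_right _ 1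
          (tendsto_natCast_atTop_atTop : Tendsto (fun n : ℕ => (n:ℝ)) atTop atTop)
      have hT : Tendsto T atTop atTop := tendsto_atTop_mono hTbig hNcast
      refine key (mem_recCone_of_tendsto hCcl hCconv hc0
        (q := fun k => ((pp.1 + ((ν k:ℝ)+1) • v.1 : WeakDual ℝ X), sn (ν k)))
        (T := T) (Eventually.of_forall fun k => h1 (ν k)) hT ?_)
      have hcoef : Tendsto (fun k => ((ν k:ℝ)+1) * (T k)⁻¹) atTop (𝓝 0) := by
        refine tendsto_of_tendsto_of_tendsto_of_le_of_le (g := fun _ => (0:ℝ))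
          (h := fun k : ℕ => ((k:ℝ)+1)⁻¹) tendsto_const_nhds
          (tendsto_inv_atTop_zero.comp hNcast) ?_ ?_
        · intro k
          show (0:ℝ) ≤ ((ν k:ℝ)+1) * (T k)⁻¹
          have := le_of_lt (hTpos k)
          positivity
        · intro k
          have hpos : (0:ℝ) < (ν k:ℝ)+1 := by positivity
          have hkpos : (0:ℝ) < (k:ℝ)+1 := by positivity
          have h3 := hTlb k
          show ((ν k:ℝ)+1) * (T k)⁻¹ ≤ ((k:ℝ)+1)⁻¹
          rw [← div_eq_mul_inv, div_le_iff₀ (hTpos k)]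
          calc ((ν k:ℝ)+1) = ((k:ℝ)+1)⁻¹ * (((k:ℝ)+1) * ((ν k:ℝ)+1)) := by
                field_simp
            _ ≤ ((k:ℝ)+1)⁻¹ * T k := by gcongr
      have hfst : Tendsto (fun k => (((T k)⁻¹ • (pp.1 - c01)
          + (((ν k:ℝ)+1) * (T k)⁻¹) • v.1 : WeakDual ℝ X))) atTop (𝓝 0) := by
        have h1' : Tendsto (fun k => (((T k)⁻¹ • (pp.1 - c01) : WeakDual ℝ X))) atTop
            (𝓝 ((0:ℝ) • (pp.1 - c01))) := (tendsto_inv_atTop_zero.comp hT).smul_const _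
        have h2' : Tendsto (fun k => ((((ν k:ℝ)+1) * (T k)⁻¹) • v.1 : WeakDual ℝ X)) atTop
            (𝓝 ((0:ℝ) • v.1)) := hcoef.smul_const _
        simpa using h1'.add h2'
      have hsnd : Tendsto (fun k => (T k)⁻¹ * (sn (ν k) - c02)) atTop (𝓝 (-1:ℝ)) := by
        refine tendsto_const_nhds.congr fun k => ?_
        have hne : T k ≠ 0 := ne_of_gt (hTpos k)
        have hne' : c02 - sn (ν k) ≠ 0 := by simpa [hTdef] using hne
        simp only [hTdef]
        rw [show sn (ν k) - c02 = -(c02 - sn (ν k)) from by ring, mul_neg,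
          inv_mul_cancel₀ hne']
      refine (hfst.prodMk_nhds hsnd).congr fun k => ?_
      have hne : T k ≠ 0 := ne_of_gt (hTpos k)
      rw [show ((pp.1 + ((ν k:ℝ)+1) • v.1 : WeakDual ℝ X), sn (ν k)) - (c01, c02)
          = ((pp.1 + ((ν k:ℝ)+1) • v.1 - c01 : WeakDual ℝ X), sn (ν k) - c02) from rfl,
        Prod.smul_mk, Prod.mk.injEq]
      constructor
      · rw [show (pp.1 + ((ν k:ℝ)+1) • v.1) - c01 = (pp.1 - c01) + ((ν k:ℝ)+1) • v.1
          from by abel, smul_add, smul_smul, mul_comm]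
      · rw [smul_eq_mul]
  · rintro ⟨u, hu, b, hb, rfl⟩
    obtain ⟨c, hc, hcl⟩ := hu
    refine ⟨c, ?_, fun l hl => ?_⟩
    · rw [hCB]; exact ⟨c.2, by simp [hc], le_refl _⟩
    · have hsplit : c + l • (u + b) = (c + l • u) + l • b := by rw [smul_add]; abel
      rw [hsplit]
      exact Set.add_mem_add (hcl l hl) ⟨by simp [hb.1], by simpa using mul_nonneg hl hb.2⟩
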